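/- Let d ≥ 1 be an integer and δ ∈ (0,1/2). There exists a constant C (depending only on d and δ) such that for all μ > 0: ∫_{ℝ×ℝ^d} min(‖w‖^{−d}, μ^{−d}) · ρ(‖w‖)² dw ≤ C · min(1, μ^{−d}). -/
import Mathlib


open Real MeasureTheory ENNReal

/-- Space-time `ℝ × ℝ^d`. -/
abbrev SpaceTime (d : ℕ) := ℝ × EuclideanSpace ℝ (Fin d)

/-- The parabolic norm `‖(t,x)‖ = (|x|⁴ + t²)^{1/4}`. -/
noncomputable def pnorm {d : ℕ} (z : SpaceTime d) : ℝ :=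
  (‖z.2‖ ^ 4 + z.1 ^ 2) ^ ((1 : ℝ) / 4)

/-- `ρ(r)² = min (r^{-(1-2δ)}) (r^{-(d+2)-2δ})`. -/
noncomputable def rhoSq (d : ℕ) (δ r : ℝ) : ℝ :=
  min (r ^ (-(1 - 2 * δ))) (r ^ (-((d : ℝ) + 2) - 2 * δ))

section Aux
open Metric Set


-- 1D pieces
lemma finI0 {c : ℝ} (hc : -1 < c) :
    ∫⁻ s in Set.Ioc (0:ℝ) 1, ENNReal.ofReal (2 * s ^ c) < ⊤ := by
  have hint : IntegrableOn (fun s : ℝ => 2 * s ^ c) (Set.Ioc 0 1) := by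
    exact ((intervalIntegrable_iff_integrableOn_Ioc_of_le zero_le_one).mp
      (intervalIntegral.intervalIntegrable_rpow' hc)).const_mul 2
  have h := hint.2
  rwa [hasFiniteIntegral_iff_ofReal ?_] at h
  filter_upwards [ae_restrict_mem measurableSet_Ioc] with s hs
  have : (0:ℝ) ≤ s ^ c := Real.rpow_nonneg hs.1.le _
  positivity
lemma finI1 {c : ℝ} (hc : c < -1) :
    ∫⁻ s in Set.Ioi (1:ℝ), ENNReal.ofReal (2 * s ^ c) < ⊤ := by
  have hint : IntegrableOn (fun s : ℝ => 2 * s ^ c) (Set.Ioi 1) :=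
    (integrableOn_Ioi_rpow_of_lt hc one_pos).const_mul 2
  have h := hint.2
  rwa [hasFiniteIntegral_iff_ofReal ?_] at h
  filter_upwards [ae_restrict_mem measurableSet_Ioi] with s hs
  have : (0:ℝ) ≤ s ^ c := Real.rpow_nonneg (by linarith [hs.out]) _
  positivity

lemma pnorm_nonneg {d : ℕ} (z : ℝ × EuclideanSpace ℝ (Fin d)) : 0 ≤ pnorm z :=
  Real.rpow_nonneg (by positivity) _

lemma continuous_pnorm {d : ℕ} : Continuous (pnorm (d := d)) := by
  apply Continuous.rpow_const
  · fun_prop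
  · exact fun _ => Or.inr (by norm_num)

lemma pnorm_lt {d : ℕ} {r : ℝ} (hr : 0 ≤ r) {w : ℝ × EuclideanSpace ℝ (Fin d)}
    (h : pnorm w < r) : |w.1| < r ^ 2 ∧ ‖w.2‖ < r := by
  have hu : (0:ℝ) ≤ ‖w.2‖ ^ 4 + w.1 ^ 2 := by positivity
  have h4 : ‖w.2‖ ^ 4 + w.1 ^ 2 < r ^ 4 := by
    have := (Real.rpow_inv_lt_iff_of_pos hu hr (by norm_num : (0:ℝ) < 4)).mp
      (by rw [← one_div]; exact h)
    rwa [show (4:ℝ) = ((4:ℕ):ℝ) by norm_num, Real.rpow_natCast] at this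
  constructor
  · have h2 : |w.1| ^ 2 < (r ^ 2) ^ 2 := by
      rw [sq_abs]; nlinarith [pow_nonneg (norm_nonneg w.2) 4]
    exact lt_of_pow_lt_pow_left₀ 2 (by positivity) h2
  · have h2 : ‖w.2‖ ^ 4 < r ^ 4 := by nlinarith [sq_nonneg w.1]
    exact lt_of_pow_lt_pow_left₀ 4 hr h2


lemma core {d : ℕ} (hd : 1 ≤ d) {a b : ℝ} (ha : 0 < a) (hab : a < (d:ℝ) + 2)
    (hb : (d:ℝ) + 2 < b) :
    ∫⁻ w : ℝ × EuclideanSpace ℝ (Fin d),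
      ENNReal.ofReal (min (pnorm w ^ (-a)) (pnorm w ^ (-b))) < ⊤ := by
  haveI : Nonempty (Fin d) := ⟨⟨0, hd⟩⟩
  haveI : Nontrivial (EuclideanSpace ℝ (Fin d)) := inferInstance
  have hd2 : (0:ℝ) < (d:ℝ) + 2 := by positivity
  have hb0 : (0:ℝ) < b := lt_trans hd2 hb
  set g : ℝ × EuclideanSpace ℝ (Fin d) → ℝ :=
    fun w => min (pnorm w ^ (-a)) (pnorm w ^ (-b)) with hg
  have g_nn : ∀ w, 0 ≤ g w := fun w =>
    le_min (Real.rpow_nonneg (pnorm_nonneg w) _) (Real.rpow_nonneg (pnorm_nonneg w) _)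
  have g_mble : AEMeasurable g volume := by
    have h1 : Measurable fun r : ℝ => min (r ^ (-a)) (r ^ (-b)) := by measurability
    exact (h1.comp continuous_pnorm.measurable).aemeasurable
  rw [MeasureTheory.lintegral_eq_lintegral_meas_lt volume
    (Filter.Eventually.of_forall g_nn) g_mble]
  set B := volume (ball (0 : EuclideanSpace ℝ (Fin d)) 1) with hB
  have hBlt : B ≠ ⊤ := measure_ball_lt_top.ne
  have key : ∀ s : ℝ, 0 < s →
      volume {w : ℝ × EuclideanSpace ℝ (Fin d) | s < g w}
        ≤ ENNReal.ofReal (2 * (min (s ^ (-a)⁻¹) (s ^ (-b)⁻¹)) ^ (d + 2)) * B := by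
    intro s hs
    set m := min (s ^ (-a)⁻¹) (s ^ (-b)⁻¹) with hm
    have hm0 : 0 < m := lt_min (Real.rpow_pos_of_pos hs _) (Real.rpow_pos_of_pos hs _)
    have hsub : {w : ℝ × EuclideanSpace ℝ (Fin d) | s < g w}
        ⊆ Set.Ioo (-(m^2)) (m^2) ×ˢ ball (0 : EuclideanSpace ℝ (Fin d)) m := by
      intro w hw
      simp only [Set.mem_setOf_eq, hg, lt_min_iff] at hw
      have hp : 0 < pnorm w := by
        rcases (pnorm_nonneg w).lt_or_eq with h | h
        · exact h
        · exfalso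
          rw [← h, Real.zero_rpow (by simpa using ha.ne')] at hw
          exact absurd hw.1 (not_lt.mpr hs.le)
      have h1 : pnorm w < s ^ (-a)⁻¹ :=
        (Real.lt_rpow_inv_iff_of_neg hp hs (by linarith)).mpr hw.1
      have h2 : pnorm w < s ^ (-b)⁻¹ :=
        (Real.lt_rpow_inv_iff_of_neg hp hs (by linarith)).mpr hw.2
      obtain ⟨ht, hx⟩ := pnorm_lt hm0.le (lt_min h1 h2)
      refine ⟨?_, mem_ball_zero_iff.mpr hx⟩
      rcases abs_lt.mp ht with ⟨h₁, h₂⟩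
      exact ⟨h₁, h₂⟩
    calc volume {w : ℝ × EuclideanSpace ℝ (Fin d) | s < g w}
        ≤ volume (Set.Ioo (-(m^2)) (m^2) ×ˢ ball (0 : EuclideanSpace ℝ (Fin d)) m) :=
          measure_mono hsub
      _ = volume (Set.Ioo (-(m^2)) (m^2))
            * volume (ball (0 : EuclideanSpace ℝ (Fin d)) m) := by
          rw [Measure.volume_eq_prod, Measure.prod_prod]
      _ = ENNReal.ofReal (2 * m ^ (d + 2)) * B := by
          rw [Real.volume_Ioo, Measure.addHaar_ball _ _ hm0.le, finrank_euclideanSpace_fin,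
            sub_neg_eq_add, ← mul_assoc, ← ENNReal.ofReal_mul (by positivity)]
          congr 1
          rw [pow_add]; ring
  have hc0 : (-1:ℝ) < (-b)⁻¹ * ((d:ℝ)+2) := by
    have : (-b)⁻¹ * ((d:ℝ)+2) = -(((d:ℝ)+2)/b) := by
      rw [mul_comm, ← div_eq_mul_inv, div_neg]
    rw [this]
    exact neg_lt_neg ((div_lt_one hb0).mpr hb)
  have hc1 : (-a)⁻¹ * ((d:ℝ)+2) < -1 := by
    have : (-a)⁻¹ * ((d:ℝ)+2) = -(((d:ℝ)+2)/a) := by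
      rw [mul_comm, ← div_eq_mul_inv, div_neg]
    rw [this]
    exact neg_lt_neg ((one_lt_div ha).mpr hab)
  calc ∫⁻ s in Set.Ioi (0:ℝ), volume {w : ℝ × EuclideanSpace ℝ (Fin d) | s < g w}
      ≤ ∫⁻ s in Set.Ioi (0:ℝ),
          ENNReal.ofReal (2 * (min (s ^ (-a)⁻¹) (s ^ (-b)⁻¹)) ^ (d + 2)) * B := by
        refine lintegral_mono_ae ?_
        filter_upwards [ae_restrict_mem measurableSet_Ioi] with s hs
        exact key s hs
    _ = (∫⁻ s in Set.Ioi (0:ℝ),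
          ENNReal.ofReal (2 * (min (s ^ (-a)⁻¹) (s ^ (-b)⁻¹)) ^ (d + 2))) * B :=
        lintegral_mul_const' B _ hBlt
    _ < ⊤ := by
        refine ENNReal.mul_lt_top ?_ hBlt.lt_top
        rw [← Set.Ioc_union_Ioi_eq_Ioi (zero_le_one : (0:ℝ) ≤ 1),
          lintegral_union measurableSet_Ioi (Set.Ioc_disjoint_Ioi le_rfl)]
        refine ENNReal.add_lt_top.mpr ⟨lt_of_le_of_lt ?_ (finI0 hc0),
          lt_of_le_of_lt ?_ (finI1 hc1)⟩
        · refine lintegral_mono_ae ?_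
          filter_upwards [ae_restrict_mem measurableSet_Ioc] with s hs
          refine ENNReal.ofReal_le_ofReal ?_
          have hmin : (min (s ^ (-a)⁻¹) (s ^ (-b)⁻¹)) ^ (d+2) ≤ (s ^ (-b)⁻¹) ^ (d+2) :=
            pow_le_pow_left₀ (le_min (Real.rpow_nonneg hs.1.le _) (Real.rpow_nonneg hs.1.le _))
              (min_le_right _ _) _
          have heq : (s ^ (-b)⁻¹) ^ (d+2) = s ^ ((-b)⁻¹ * ((d:ℝ)+2)) := by
            rw [Real.rpow_mul hs.1.le, ← Real.rpow_natCast (s ^ (-b)⁻¹) (d+2)]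
            congr 1
            push_cast; ring
          rw [← heq]; linarith
        · refine lintegral_mono_ae ?_
          filter_upwards [ae_restrict_mem measurableSet_Ioi] with s hs
          have hs0 : (0:ℝ) < s := lt_trans one_pos hs
          refine ENNReal.ofReal_le_ofReal ?_
          have hmin : (min (s ^ (-a)⁻¹) (s ^ (-b)⁻¹)) ^ (d+2) ≤ (s ^ (-a)⁻¹) ^ (d+2) :=
            pow_le_pow_left₀ (le_min (Real.rpow_nonneg hs0.le _) (Real.rpow_nonneg hs0.le _))
              (min_le_left _ _) _
          have heq : (s ^ (-a)⁻¹) ^ (d+2) = s ^ ((-a)⁻¹ * ((d:ℝ)+2)) := by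
            rw [Real.rpow_mul hs0.le, ← Real.rpow_natCast (s ^ (-a)⁻¹) (d+2)]
            congr 1
            push_cast; ring
          rw [← heq]; linarith

end Aux

lemma rhoSq_nonneg {d : ℕ} {δ : ℝ} {r : ℝ} (hr : 0 ≤ r) : 0 ≤ rhoSq d δ r :=
  le_min (Real.rpow_nonneg hr _) (Real.rpow_nonneg hr _)

lemma rhoSq_eq (d : ℕ) (δ r : ℝ) :
    rhoSq d δ r = min (r ^ (-(1 - 2 * δ))) (r ^ (-((d:ℝ) + 2 + 2 * δ))) := by
  rw [rhoSq, show -((d:ℝ)+2) - 2*δ = -((d:ℝ)+2+2*δ) by ring]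

lemma rho_mul {d : ℕ} (hd : 1 ≤ d) {δ : ℝ} (hδ0 : 0 < δ) (hδ1 : δ < 1/2) (p : ℝ) (hp : 0 ≤ p) :
    p ^ (-(d:ℝ)) * rhoSq d δ p
      = min (p ^ (-((d:ℝ) + (1 - 2*δ)))) (p ^ (-((d:ℝ) + ((d:ℝ) + 2 + 2*δ)))) := by
  have hd1 : (1:ℝ) ≤ (d:ℝ) := by exact_mod_cast hd
  rcases hp.lt_or_eq with h | h
  · rw [rhoSq_eq, mul_min_of_nonneg _ _ (Real.rpow_nonneg hp _),
      ← Real.rpow_add h, ← Real.rpow_add h]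
    congr 2 <;> ring
  · rw [← h, Real.zero_rpow (by intro hc; rw [neg_eq_zero] at hc; linarith),
      Real.zero_rpow (by intro hc; rw [neg_eq_zero] at hc; linarith),
      Real.zero_rpow (by intro hc; rw [neg_eq_zero] at hc; linarith)]
    simp

theorem stmt11 (d : ℕ) (hd : 1 ≤ d) (δ : ℝ) (hδ : δ ∈ Set.Ioo (0 : ℝ) (1 / 2)) :
    ∃ C : ℝ, ∀ μ : ℝ, 0 < μ →
      ∫⁻ w : SpaceTime d,
          ENNReal.ofReal
            (min (pnorm w ^ (-(d : ℝ))) (μ ^ (-(d : ℝ))) * rhoSq d δ (pnorm w))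
        ≤ ENNReal.ofReal (C * min 1 (μ ^ (-(d : ℝ)))) := by
  obtain ⟨hδ0, hδ1⟩ := hδ
  have hd1 : (1:ℝ) ≤ (d:ℝ) := by exact_mod_cast hd
  have hI1 := core hd (a := 1 - 2*δ) (b := (d:ℝ) + 2 + 2*δ)
    (by linarith) (by linarith) (by linarith)
  have hI2 := core hd (a := (d:ℝ) + (1 - 2*δ)) (b := (d:ℝ) + ((d:ℝ) + 2 + 2*δ))
    (by linarith) (by linarith) (by linarith)
  set C1 : ℝ := (∫⁻ w : ℝ × EuclideanSpace ℝ (Fin d),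
      ENNReal.ofReal (min (pnorm w ^ (-(1 - 2*δ))) (pnorm w ^ (-((d:ℝ) + 2 + 2*δ))))).toReal
    with hC1
  set C2 : ℝ := (∫⁻ w : ℝ × EuclideanSpace ℝ (Fin d),
      ENNReal.ofReal (min (pnorm w ^ (-((d:ℝ) + (1 - 2*δ))))
        (pnorm w ^ (-((d:ℝ) + ((d:ℝ) + 2 + 2*δ)))))).toReal with hC2
  have eC1 : (∫⁻ w : ℝ × EuclideanSpace ℝ (Fin d),
      ENNReal.ofReal (min (pnorm w ^ (-(1 - 2*δ))) (pnorm w ^ (-((d:ℝ) + 2 + 2*δ)))))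
        = ENNReal.ofReal C1 := (ENNReal.ofReal_toReal hI1.ne).symm
  have eC2 : (∫⁻ w : ℝ × EuclideanSpace ℝ (Fin d),
      ENNReal.ofReal (min (pnorm w ^ (-((d:ℝ) + (1 - 2*δ))))
        (pnorm w ^ (-((d:ℝ) + ((d:ℝ) + 2 + 2*δ))))))
        = ENNReal.ofReal C2 := (ENNReal.ofReal_toReal hI2.ne).symm
  refine ⟨max C1 C2, fun μ hμ => ?_⟩
  have hμd : 0 ≤ μ ^ (-(d:ℝ)) := Real.rpow_nonneg hμ.le _
  rcases le_total 1 μ with hμ1 | hμ1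
  · -- μ ≥ 1 : use the μ^{-d} bound
    have hle : μ ^ (-(d:ℝ)) ≤ 1 :=
      Real.rpow_le_one_of_one_le_of_nonpos hμ1 (neg_nonpos.mpr (by positivity))
    rw [min_eq_right hle]
    calc ∫⁻ w : SpaceTime d, ENNReal.ofReal
            (min (pnorm w ^ (-(d : ℝ))) (μ ^ (-(d : ℝ))) * rhoSq d δ (pnorm w))
        ≤ ∫⁻ w : SpaceTime d, ENNReal.ofReal (μ ^ (-(d:ℝ)))
            * ENNReal.ofReal (rhoSq d δ (pnorm w)) := by
          refine lintegral_mono fun w => ?_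
          rw [← ENNReal.ofReal_mul hμd]
          exact ENNReal.ofReal_le_ofReal
            (mul_le_mul_of_nonneg_right (min_le_right _ _) (rhoSq_nonneg (pnorm_nonneg w)))
      _ = ENNReal.ofReal (μ ^ (-(d:ℝ)))
            * ∫⁻ w : SpaceTime d, ENNReal.ofReal (rhoSq d δ (pnorm w)) :=
          lintegral_const_mul' _ _ ENNReal.ofReal_ne_top
      _ = ENNReal.ofReal (μ ^ (-(d:ℝ))) * ENNReal.ofReal C1 := by
          rw [← eC1]
          congr 1
          exact lintegral_congr fun w => by rw [rhoSq_eq]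
      _ ≤ ENNReal.ofReal (max C1 C2 * μ ^ (-(d:ℝ))) := by
          rw [← ENNReal.ofReal_mul hμd]
          exact ENNReal.ofReal_le_ofReal
            (by rw [mul_comm]
                exact mul_le_mul_of_nonneg_right (le_max_left _ _) hμd)
  · -- μ ≤ 1 : use the pnorm^{-d} bound
    have hge : 1 ≤ μ ^ (-(d:ℝ)) :=
      Real.one_le_rpow_of_pos_of_le_one_of_nonpos hμ hμ1 (neg_nonpos.mpr (by positivity))
    rw [min_eq_left hge]
    calc ∫⁻ w : SpaceTime d, ENNReal.ofReal
            (min (pnorm w ^ (-(d : ℝ))) (μ ^ (-(d : ℝ))) * rhoSq d δ (pnorm w))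
        ≤ ∫⁻ w : ℝ × EuclideanSpace ℝ (Fin d),
            ENNReal.ofReal (min (pnorm w ^ (-((d:ℝ) + (1 - 2*δ))))
              (pnorm w ^ (-((d:ℝ) + ((d:ℝ) + 2 + 2*δ))))) := by
          refine lintegral_mono fun w => ?_
          refine ENNReal.ofReal_le_ofReal ?_
          rw [← rho_mul hd hδ0 hδ1 _ (pnorm_nonneg w)]
          exact mul_le_mul_of_nonneg_right (min_le_left _ _) (rhoSq_nonneg (pnorm_nonneg w))
      _ = ENNReal.ofReal C2 := eC2
      _ ≤ ENNReal.ofReal (max C1 C2 * 1) := by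
          refine ENNReal.ofReal_le_ofReal ?_
          rw [mul_one]
          exact le_max_right _ _
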